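/- Let (X_n) be a sequence of non-negative random variables, uniformly bounded by 1, such that the sequence E(X_n)·n^a converges to a nonzero constant for some a ∈ (0,1), and such that the centered variables X_n − E(X_n) are pairwise orthogonal in L². Set W_N = ∑_{n=1}^N E(X_n). Then almost surely (1/W_N) ∑_{n=1}^N X_n → 1 as N → ∞. -/

import Mathlib

open Filter MeasureTheory

lemma aux_pow_sub_pow {a b : ℝ} (ha : 0 ≤ a) (hab : a ≤ b) (m : ℕ) :
    b ^ (m+1) - a ^ (m+1) ≤ (m+1 : ℝ) * (b - a) * b ^ m := by
  induction m with
  | zero => simp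
  | succ n ih =>
    have hb : 0 ≤ b := ha.trans hab
    have h2 : b * (b^(n+1) - a^(n+1)) ≤ b * (((n:ℝ)+1) * (b-a) * b^n) :=
      mul_le_mul_of_nonneg_left (by push_cast at ih ⊢; linarith) hb
    have h3 : (b-a) * a^(n+1) ≤ (b-a) * b^(n+1) :=
      mul_le_mul_of_nonneg_left (pow_le_pow_left₀ ha hab _) (by linarith)
    have key : b ^ (n+2) - a ^ (n+2) = b * (b^(n+1) - a^(n+1)) + (b - a) * a^(n+1) := by ring
    have h4 : b * (((n:ℝ)+1)*(b-a)*b^n) = ((n:ℝ)+1)*(b-a)*b^(n+1) := by ring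
    push_cast
    linarith

lemma aux_sandwich (S W : ℕ → ℝ) (φ : ℕ → ℕ) (hφ : StrictMono φ)
    (hS0 : ∀ N, 0 ≤ S N) (hSmono : Monotone S) (hWmono : Monotone W)
    (hW0 : 0 < W (φ 0))
    (h1 : Tendsto (fun k => S (φ k) / W (φ k)) atTop (nhds 1))
    (h2 : Tendsto (fun k => W (φ (k+1)) / W (φ k)) atTop (nhds 1)) :
    Tendsto (fun N => S N / W N) atTop (nhds 1) := by
  classical
  set idx : ℕ → ℕ := fun N => Nat.findGreatest (fun j => φ j ≤ N) N with hidx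
  have hWpos : ∀ k, 0 < W (φ k) := fun k =>
    lt_of_lt_of_le hW0 (hWmono (hφ.monotone (Nat.zero_le k)))
  have hle : ∀ N, φ 0 ≤ N → φ (idx N) ≤ N := fun N hN =>
    Nat.findGreatest_spec (P := fun j => φ j ≤ N) (Nat.zero_le N) hN
  have hlt : ∀ N, φ 0 ≤ N → N < φ (idx N + 1) := by
    intro N hN
    by_contra h
    push_neg at h
    have h5 : idx N + 1 ≤ N := le_trans (hφ.le_apply) h
    have h6 : idx N + 1 ≤ idx N := Nat.le_findGreatest (P := fun j => φ j ≤ N) h5 h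
    omega
  have hidxtop : Tendsto idx atTop atTop := by
    apply tendsto_atTop_atTop.2
    intro b
    exact ⟨φ b, fun N hN => Nat.le_findGreatest (P := fun j => φ j ≤ N) (le_trans hφ.le_apply hN) hN⟩
  have hU : Tendsto (fun k => (S (φ (k+1)) / W (φ (k+1))) * (W (φ (k+1)) / W (φ k)))
      atTop (nhds 1) := by
    have := (h1.comp (tendsto_add_atTop_nat 1)).mul h2
    simpa using this
  have hL : Tendsto (fun k => (S (φ k) / W (φ k)) * (W (φ k) / W (φ (k+1))))
      atTop (nhds 1) := by
    have h2' : Tendsto (fun k => (W (φ (k+1)) / W (φ k))⁻¹) atTop (nhds 1) := by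
      simpa using h2.inv₀ one_ne_zero
    have h2'' : Tendsto (fun k => W (φ k) / W (φ (k+1))) atTop (nhds 1) := by
      convert h2' using 2 with k
      rw [inv_div]
    simpa using h1.mul h2''
  apply tendsto_of_tendsto_of_tendsto_of_le_of_le'
    (hL.comp hidxtop) (hU.comp hidxtop)
  · filter_upwards [eventually_ge_atTop (φ 0)] with N hN
    have hk1 := hle N hN
    have hk2 := hlt N hN
    have e1 : (S (φ (idx N)) / W (φ (idx N))) * (W (φ (idx N)) / W (φ (idx N + 1)))
        = S (φ (idx N)) / W (φ (idx N + 1)) :=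
      div_mul_div_cancel₀ (ne_of_gt (hWpos _))
    simp only [Function.comp]
    rw [e1]
    exact div_le_div₀ (hS0 N) (hSmono hk1) (lt_of_lt_of_le hW0 (hWmono hN)) (hWmono hk2.le)
  · filter_upwards [eventually_ge_atTop (φ 0)] with N hN
    have hk1 := hle N hN
    have hk2 := hlt N hN
    have e1 : (S (φ (idx N + 1)) / W (φ (idx N + 1))) * (W (φ (idx N + 1)) / W (φ (idx N)))
        = S (φ (idx N + 1)) / W (φ (idx N)) :=
      div_mul_div_cancel₀ (ne_of_gt (hWpos _))
    simp only [Function.comp]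
    rw [e1]
    exact div_le_div₀ (hS0 _) (hSmono hk2.le) (hWpos _) (hWmono hk1)

lemma aux_ae_tendsto_zero {Ω : Type*} [MeasurableSpace Ω] (μ : Measure Ω)
    (f : ℕ → Ω → ℝ) (hm : ∀ k, AEMeasurable (f k) μ)
    (B : ℕ → ℝ) (hB0 : ∀ k, 0 ≤ B k)
    (hB : ∀ k, ∫⁻ ω, ENNReal.ofReal ((f k ω)^2) ∂μ ≤ ENNReal.ofReal (B k))
    (hsum : Summable B) :
    ∀ᵐ ω ∂μ, Tendsto (fun k => f k ω) atTop (nhds 0) := by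
  set g : ℕ → Ω → ENNReal := fun k ω => ENNReal.ofReal ((f k ω)^2) with hg
  have hgm : ∀ k, AEMeasurable (g k) μ := fun k =>
    (ENNReal.measurable_ofReal.comp_aemeasurable ((hm k).pow_const 2))
  have htsum : ∫⁻ ω, ∑' k, g k ω ∂μ ≠ ⊤ := by
    rw [lintegral_tsum hgm]
    refine ne_of_lt (lt_of_le_of_lt (ENNReal.tsum_le_tsum fun k => hB k) ?_)
    rw [← ENNReal.ofReal_tsum_of_nonneg hB0 hsum]
    exact ENNReal.ofReal_lt_top
  have hae : ∀ᵐ ω ∂μ, (∑' k, g k ω) < ⊤ :=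
    ae_lt_top' (AEMeasurable.ennreal_tsum hgm) htsum
  filter_upwards [hae] with ω hω
  have h0 : Tendsto (fun k => g k ω) atTop (nhds 0) :=
    ENNReal.tendsto_atTop_zero_of_tsum_ne_top hω.ne
  have h1 : Tendsto (fun k => (f k ω)^2) atTop (nhds 0) := by
    have := (ENNReal.tendsto_toReal (by simp)).comp h0
    simp only [Function.comp_def, hg, ENNReal.toReal_ofReal (sq_nonneg _)] at this
    simpa using this
  have h2 : Tendsto (fun k => |f k ω|) atTop (nhds 0) := by
    have := (Real.continuous_sqrt.tendsto 0).comp h1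
    simp only [Function.comp_def, Real.sqrt_sq_eq_abs, Real.sqrt_zero] at this
    exact this
  exact tendsto_zero_iff_abs_tendsto_zero _ |>.2 h2

/-- Strong law for orthogonal bounded non-negative random variables with means `∼ c n^{-a}`:
almost surely `W_N⁻¹ ∑_{n=1}^N X_n → 1`, where `W_N = ∑_{n=1}^N E(X_n)`. -/
theorem strong_law_orthogonal
    {Ω : Type*} [MeasurableSpace Ω] (μ : Measure Ω) [IsProbabilityMeasure μ]
    (X : ℕ → Ω → ℝ) (hmeas : ∀ n, Measurable (X n))
    (hpos : ∀ n ω, 0 ≤ X n ω) (hbdd : ∀ n ω, X n ω ≤ 1)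
    (a c : ℝ) (ha : a ∈ Set.Ioo (0 : ℝ) 1) (hc : c ≠ 0)
    (hmean : Tendsto (fun n : ℕ => (∫ ω, X n ω ∂μ) * (n : ℝ) ^ a) atTop (nhds c))
    (horth : ∀ n m : ℕ, n ≠ m →
      ∫ ω, (X n ω - ∫ ω', X n ω' ∂μ) * (X m ω - ∫ ω', X m ω' ∂μ) ∂μ = 0)
    (W : ℕ → ℝ) (hW : ∀ N, W N = ∑ n ∈ Finset.Icc 1 N, ∫ ω, X n ω ∂μ) :
    ∀ᵐ ω ∂μ, Tendsto (fun N : ℕ => (W N)⁻¹ * ∑ n ∈ Finset.Icc 1 N, X n ω)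
      atTop (nhds 1) := by
  classical
  obtain ⟨ha0, ha1⟩ := ha
  set e : ℕ → ℝ := fun n => ∫ ω, X n ω ∂μ with he
  -- basic integrability and bounds on means
  have hint : ∀ n, Integrable (X n) μ := fun n =>
    (integrable_const (1:ℝ)).mono' (hmeas n).aestronglyMeasurable
      (ae_of_all _ fun ω => by
        rw [Real.norm_eq_abs, abs_of_nonneg (hpos n ω)]; exact hbdd n ω)
  have he0 : ∀ n, 0 ≤ e n := fun n => integral_nonneg (hpos n)
  have he1 : ∀ n, e n ≤ 1 := fun n => by
    have := integral_mono (hint n) (integrable_const (1:ℝ)) (fun ω => hbdd n ω)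
    simpa using this
  have hcpos : 0 < c := by
    have h0 : 0 ≤ c := ge_of_tendsto' hmean fun n =>
      mul_nonneg (he0 n) (Real.rpow_nonneg (Nat.cast_nonneg n) a)
    exact h0.lt_of_ne' hc
  -- bounds on means
  obtain ⟨n₀, hn₀1, hn₀⟩ : ∃ n₀ : ℕ, 1 ≤ n₀ ∧ ∀ n, n₀ ≤ n →
      c/2 * (n:ℝ)^(-a) ≤ e n ∧ e n ≤ 2*c*(n:ℝ)^(-a) := by
    obtain ⟨N0, hN0⟩ := Metric.tendsto_atTop.mp hmean (c/2) (by positivity)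
    refine ⟨max 1 N0, le_max_left _ _, fun n hn => ?_⟩
    have h1n : 1 ≤ n := le_trans (le_max_left 1 N0) hn
    have hd := hN0 n (le_trans (le_max_right 1 N0) hn)
    rw [Real.dist_eq] at hd
    have habs := abs_lt.mp hd
    have hnpos : (0:ℝ) < (n:ℝ) := by exact_mod_cast h1n
    have hinv : (n:ℝ)^a * (n:ℝ)^(-a) = 1 := by
      rw [← Real.rpow_add hnpos]; simp
    have hrpnn : (0:ℝ) ≤ (n:ℝ)^(-a) := Real.rpow_nonneg hnpos.le _
    constructor
    · have h2 : c/2 ≤ e n * (n:ℝ)^a := by linarith [habs.1]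
      calc c/2 * (n:ℝ)^(-a) ≤ (e n * (n:ℝ)^a) * (n:ℝ)^(-a) :=
            mul_le_mul_of_nonneg_right h2 hrpnn
        _ = e n := by rw [mul_assoc, hinv, mul_one]
    · have h2 : e n * (n:ℝ)^a ≤ 2*c := by linarith [habs.2]
      calc e n = (e n * (n:ℝ)^a) * (n:ℝ)^(-a) := by rw [mul_assoc, hinv, mul_one]
        _ ≤ 2*c * (n:ℝ)^(-a) := mul_le_mul_of_nonneg_right h2 hrpnn
  -- monotonicity of W
  have hWmono : Monotone W := by
    apply monotone_nat_of_le_succ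
    intro N
    rw [hW, hW, show Finset.Icc 1 N = Finset.Ioc 0 N from Finset.Icc_add_one_left_eq_Ioc 0 N,
      show Finset.Icc 1 (N+1) = Finset.Ioc 0 (N+1) from Finset.Icc_add_one_left_eq_Ioc 0 (N+1),
      Finset.sum_Ioc_succ_top (Nat.zero_le N)]
    exact le_add_of_nonneg_right (he0 _)
  -- lower bound on W
  have hWlow : ∀ N : ℕ, 2*n₀ ≤ N → c/4 * (N:ℝ)^(1-a) ≤ W N := by
    intro N hN
    have h1N : 1 ≤ N := by omega
    have hNpos : (0:ℝ) < (N:ℝ) := by exact_mod_cast h1N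
    have hrpnn : (0:ℝ) ≤ (N:ℝ)^(-a) := Real.rpow_nonneg hNpos.le _
    have step1 : ∑ n ∈ Finset.Icc n₀ N, e n ≤ W N := by
      rw [hW]
      exact Finset.sum_le_sum_of_subset_of_nonneg
        (Finset.Icc_subset_Icc hn₀1 le_rfl) (fun n _ _ => he0 n)
    have step2 : ∀ n ∈ Finset.Icc n₀ N, c/2 * (N:ℝ)^(-a) ≤ e n := by
      intro n hn
      obtain ⟨hn1, hn2⟩ := Finset.mem_Icc.mp hn
      refine le_trans ?_ ((hn₀ n hn1).1)
      have : (N:ℝ)^(-a) ≤ (n:ℝ)^(-a) := by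
        apply Real.rpow_le_rpow_of_nonpos _ _ (by linarith)
        · have hn0 : 0 < n := lt_of_lt_of_le Nat.zero_lt_one (le_trans hn₀1 hn1)
          exact_mod_cast hn0
        · exact_mod_cast hn2
      have hc2 : (0:ℝ) ≤ c/2 := by positivity
      exact mul_le_mul_of_nonneg_left this hc2
    have step3 : ((Finset.Icc n₀ N).card : ℝ) * (c/2 * (N:ℝ)^(-a)) ≤
        ∑ n ∈ Finset.Icc n₀ N, e n := by
      have := Finset.card_nsmul_le_sum (Finset.Icc n₀ N) e (c/2 * (N:ℝ)^(-a)) step2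
      simpa [nsmul_eq_mul] using this
    have hcard : (Finset.Icc n₀ N).card = N + 1 - n₀ := Nat.card_Icc n₀ N
    have hcardR : ((N:ℝ))/2 ≤ ((Finset.Icc n₀ N).card : ℝ) := by
      rw [hcard]
      have hle : n₀ ≤ N + 1 := by omega
      rw [Nat.cast_sub hle]
      push_cast
      have h2n : 2 * (n₀:ℝ) ≤ (N:ℝ) := by exact_mod_cast hN
      linarith
    have hsplit : (N:ℝ)^(1-a) = (N:ℝ) * (N:ℝ)^(-a) := by
      rw [sub_eq_add_neg, Real.rpow_add hNpos, Real.rpow_one]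
    calc c/4 * (N:ℝ)^(1-a) = ((N:ℝ)/2) * (c/2 * (N:ℝ)^(-a)) := by
          rw [hsplit]; ring
      _ ≤ ((Finset.Icc n₀ N).card : ℝ) * (c/2 * (N:ℝ)^(-a)) := by
          apply mul_le_mul_of_nonneg_right hcardR (by positivity)
      _ ≤ ∑ n ∈ Finset.Icc n₀ N, e n := step3
      _ ≤ W N := step1
  -- choice of exponent m
  set m : ℕ := ⌈2/(1-a)⌉₊ with hm
  have h1a : (0:ℝ) < 1 - a := by linarith
  have hmge : (2:ℝ)/(1-a) ≤ (m:ℝ) := Nat.le_ceil _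
  have hm1 : 1 ≤ m := by
    have h2 : (2:ℝ) ≤ 2/(1-a) := by
      rw [le_div_iff₀ h1a]; nlinarith
    have h3 : (1:ℝ) ≤ (m:ℝ) := by linarith
    exact_mod_cast h3
  have hma : (2:ℝ) ≤ (m:ℝ) * (1-a) := (div_le_iff₀ h1a).mp hmge
  set K : ℕ := 2*n₀ + 2 with hK
  set φ : ℕ → ℕ := fun k => (k+K)^m with hφdef
  have hφ : StrictMono φ := fun k₁ k₂ h => Nat.pow_lt_pow_left (by omega) (by omega)
  have hφK : ∀ k, 2*n₀ ≤ φ k := by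
    intro k
    show 2*n₀ ≤ (k+K)^m
    calc 2*n₀ ≤ k + K := by omega
      _ ≤ (k+K)^m := Nat.le_self_pow (by omega) _
  have hφ1 : ∀ k, 1 ≤ φ k := fun k => by
    show 1 ≤ (k+K)^m
    have := Nat.le_self_pow (n := m) (by omega) (k+K); omega
  have hφRpos : ∀ k, (0:ℝ) < (φ k : ℝ) := fun k => by exact_mod_cast hφ1 k
  have hWφpos : ∀ k, 0 < W (φ k) := fun k => by
    have h1 := hWlow _ (hφK k)
    have h2 : (0:ℝ) < c/4 * ((φ k : ℕ):ℝ)^(1-a) := by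
      have := hφRpos k
      positivity
    linarith
  -- variance bound
  have hvar : ∀ N : ℕ, (∫ ω, (∑ n ∈ Finset.Icc 1 N, (X n ω - e n))^2 ∂μ) ≤ W N := by
    intro N
    have hYm : ∀ n : ℕ, Measurable (fun ω => X n ω - e n) := fun n =>
      (hmeas n).sub measurable_const
    have hYbd : ∀ (n : ℕ) ω, |X n ω - e n| ≤ 1 := fun n ω =>
      abs_le.2 ⟨by linarith [hpos n ω, he1 n], by linarith [hbdd n ω, he0 n]⟩
    have hprod : ∀ n m' : ℕ, Integrable (fun ω => (X n ω - e n) * (X m' ω - e m')) μ := by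
      intro n m'
      refine (integrable_const (1:ℝ)).mono'
        ((hYm n).mul (hYm m')).aestronglyMeasurable (ae_of_all _ fun ω => ?_)
      rw [Real.norm_eq_abs, abs_mul]
      exact mul_le_one₀ (hYbd n ω) (abs_nonneg _) (hYbd m' ω)
    have expand : (∫ ω, (∑ n ∈ Finset.Icc 1 N, (X n ω - e n))^2 ∂μ)
        = ∑ n ∈ Finset.Icc 1 N, ∑ m' ∈ Finset.Icc 1 N,
            ∫ ω, (X n ω - e n) * (X m' ω - e m') ∂μ := by
      have hpt : ∀ ω, (∑ n ∈ Finset.Icc 1 N, (X n ω - e n))^2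
          = ∑ n ∈ Finset.Icc 1 N, ∑ m' ∈ Finset.Icc 1 N,
              (X n ω - e n) * (X m' ω - e m') := fun ω => by
        rw [sq, Finset.sum_mul_sum]
      simp_rw [hpt]
      rw [integral_finset_sum _ (fun n _ => integrable_finset_sum _ (fun m' _ => hprod n m'))]
      exact Finset.sum_congr rfl fun n _ => integral_finset_sum _ (fun m' _ => hprod n m')
    rw [expand, hW]
    apply Finset.sum_le_sum
    intro n hn
    have hdiag : ∑ m' ∈ Finset.Icc 1 N, ∫ ω, (X n ω - e n) * (X m' ω - e m') ∂μ
        = ∫ ω, (X n ω - e n) * (X n ω - e n) ∂μ :=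
      Finset.sum_eq_single_of_mem n hn (fun b _ hb => horth n b (Ne.symm hb))
    rw [hdiag]
    have hX2int : Integrable (fun ω => X n ω * X n ω) μ := by
      refine (integrable_const (1:ℝ)).mono'
        ((hmeas n).mul (hmeas n)).aestronglyMeasurable (ae_of_all _ fun ω => ?_)
      rw [Real.norm_eq_abs, abs_mul]
      have h1 : |X n ω| ≤ 1 := abs_le.2 ⟨by linarith [hpos n ω], hbdd n ω⟩
      exact mul_le_one₀ h1 (abs_nonneg _) h1
    have hexp : ∫ ω, (X n ω - e n) * (X n ω - e n) ∂μ
        = ∫ ω, (X n ω * X n ω - (2 * e n) * X n ω + e n * e n) ∂μ :=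
      integral_congr_ae (ae_of_all _ fun ω => by ring)
    have hmulint : Integrable (fun ω => 2 * e n * X n ω) μ := (hint n).const_mul _
    have hsubint : Integrable (fun ω => X n ω * X n ω - 2 * e n * X n ω) μ :=
      hX2int.sub hmulint
    rw [hexp, integral_add hsubint (integrable_const _),
      integral_sub hX2int hmulint, integral_const_mul]
    have hconst : ∫ _ω, (e n * e n) ∂μ = e n * e n := by
      simp [measure_univ]
    rw [hconst]
    have hXX : ∫ ω, X n ω * X n ω ∂μ ≤ e n := by
      refine le_trans (integral_mono hX2int (hint n) (fun ω => ?_)) le_rfl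
      nlinarith [hpos n ω, hbdd n ω]
    nlinarith [he0 n]
  -- ratio convergence along the subsequence
  have hIcc : ∀ N : ℕ, Finset.Icc 1 N = Finset.Ioc 0 N := fun N => Finset.Icc_add_one_left_eq_Ioc 0 N
  have hrat : Tendsto (fun k => W (φ (k+1)) / W (φ k)) atTop (nhds 1) := by
    have hub : ∀ k : ℕ, W (φ (k+1)) / W (φ k)
        ≤ 1 + (8*(m:ℝ)*2^(m-1)) * (((k+K : ℕ)):ℝ)⁻¹ := by
      intro k
      set t : ℝ := (((k+K : ℕ)):ℝ) with ht
      have ht1 : (1:ℝ) ≤ t := by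
        rw [ht]; exact_mod_cast Nat.one_le_iff_ne_zero.mpr (by omega)
      have ht0 : (0:ℝ) < t := lt_of_lt_of_le one_pos ht1
      have hφcast : ((φ k : ℕ):ℝ) = t^m := by
        show (((k+K)^m : ℕ):ℝ) = t^m
        rw [Nat.cast_pow, ht]
      have hφcast' : ((φ (k+1) : ℕ):ℝ) = (t+1)^m := by
        show (((k+1+K)^m : ℕ):ℝ) = (t+1)^m
        rw [Nat.cast_pow]
        congr 1
        rw [ht]
        push_cast
        ring
      -- split W
      have hsplit : W (φ (k+1)) = W (φ k) + ∑ n ∈ Finset.Ioc (φ k) (φ (k+1)), e n := by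
        rw [hW, hW, hIcc, hIcc,
          ← Finset.sum_Ioc_consecutive e (Nat.zero_le (φ k)) (hφ (lt_add_one k)).le]
      -- increment bound
      have hub1 : ∀ n ∈ Finset.Ioc (φ k) (φ (k+1)), e n ≤ 2*c*((φ k : ℕ):ℝ)^(-a) := by
        intro n hn
        obtain ⟨hn1, hn2⟩ := Finset.mem_Ioc.mp hn
        have hn₀n : n₀ ≤ n := by have := hφK k; omega
        refine le_trans ((hn₀ n hn₀n).2) ?_
        have hmono : (n:ℝ)^(-a) ≤ ((φ k : ℕ):ℝ)^(-a) := by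
          apply Real.rpow_le_rpow_of_nonpos (hφRpos k) _ (by linarith)
          exact_mod_cast hn1.le
        have : (0:ℝ) ≤ 2*c := by linarith
        exact mul_le_mul_of_nonneg_left hmono this
      have hcard : ((Finset.Ioc (φ k) (φ (k+1))).card : ℝ) = ((φ (k+1) : ℕ):ℝ) - ((φ k : ℕ):ℝ) := by
        rw [Nat.card_Ioc, Nat.cast_sub (hφ (lt_add_one k)).le]
      have hincr1 : ∑ n ∈ Finset.Ioc (φ k) (φ (k+1)), e n
          ≤ (((φ (k+1) : ℕ):ℝ) - ((φ k : ℕ):ℝ)) * (2*c*((φ k : ℕ):ℝ)^(-a)) := by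
        have := Finset.sum_le_card_nsmul _ _ _ hub1
        rw [nsmul_eq_mul] at this
        rwa [hcard] at this
      -- polynomial difference bound
      have hmm : m - 1 + 1 = m := Nat.succ_pred_eq_of_pos hm1
      have hdiff : ((φ (k+1) : ℕ):ℝ) - ((φ k : ℕ):ℝ) ≤ (m:ℝ) * 2^(m-1) * t^(m-1) := by
        rw [hφcast, hφcast']
        have h1 : (t+1)^(m-1+1) - t^(m-1+1) ≤ ((m-1 : ℕ)+1 : ℝ) * ((t+1) - t) * (t+1)^(m-1) :=
          aux_pow_sub_pow (by linarith) (by linarith) (m-1)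
        rw [hmm] at h1
        have h2 : ((m-1 : ℕ)+1 : ℝ) = (m:ℝ) := by exact_mod_cast congrArg (Nat.cast (R := ℝ)) hmm
        rw [h2] at h1
        have h3 : (t+1)^(m-1) ≤ (2*t)^(m-1) := pow_le_pow_left₀ (by linarith) (by linarith) _
        have h4 : ((2:ℝ)*t)^(m-1) = 2^(m-1) * t^(m-1) := mul_pow 2 t (m-1)
        have hmnn : (0:ℝ) ≤ (m:ℝ) := Nat.cast_nonneg m
        calc (t+1)^m - t^m ≤ (m:ℝ) * ((t+1) - t) * (t+1)^(m-1) := h1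
          _ = (m:ℝ) * (t+1)^(m-1) := by ring_nf
          _ ≤ (m:ℝ) * (2^(m-1) * t^(m-1)) := by
              rw [← h4]; exact mul_le_mul_of_nonneg_left h3 hmnn
          _ = (m:ℝ) * 2^(m-1) * t^(m-1) := by ring
      have hrpnn : (0:ℝ) ≤ ((φ k : ℕ):ℝ)^(-a) := Real.rpow_nonneg (hφRpos k).le _
      have hincr : ∑ n ∈ Finset.Ioc (φ k) (φ (k+1)), e n
          ≤ 2*c*(m:ℝ)*2^(m-1) * t^(m-1) * ((φ k : ℕ):ℝ)^(-a) := by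
        refine le_trans hincr1 ?_
        have := mul_le_mul_of_nonneg_right hdiff (show (0:ℝ) ≤ 2*c*((φ k : ℕ):ℝ)^(-a) by positivity)
        calc (((φ (k+1) : ℕ):ℝ) - ((φ k : ℕ):ℝ)) * (2*c*((φ k : ℕ):ℝ)^(-a))
            ≤ ((m:ℝ) * 2^(m-1) * t^(m-1)) * (2*c*((φ k : ℕ):ℝ)^(-a)) := this
          _ = 2*c*(m:ℝ)*2^(m-1) * t^(m-1) * ((φ k : ℕ):ℝ)^(-a) := by ring
      -- the rpow identity
      have htpow : t^(m-1) = t^m / t := by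
        rw [eq_div_iff (ne_of_gt ht0), ← pow_succ, hmm]
      have hone : ((φ k : ℕ):ℝ)^(1-a) = ((φ k : ℕ):ℝ)^(-a) * t^m := by
        rw [hφcast]
        have hx0 : (0:ℝ) < t^m := by positivity
        rw [show (1:ℝ)-a = -a + 1 by ring, Real.rpow_add hx0, Real.rpow_one]
      have hidentity : t^(m-1) * ((φ k : ℕ):ℝ)^(-a) = t⁻¹ * ((φ k : ℕ):ℝ)^(1-a) := by
        rw [hone, htpow]
        field_simp
      -- combine
      have hkey : 2*c*(m:ℝ)*2^(m-1) * t^(m-1) * ((φ k : ℕ):ℝ)^(-a)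
          ≤ (8*(m:ℝ)*2^(m-1) * t⁻¹) * W (φ k) := by
        have hWl := hWlow (φ k) (hφK k)
        have hcoef : (0:ℝ) ≤ 8*(m:ℝ)*2^(m-1) * t⁻¹ := by positivity
        calc 2*c*(m:ℝ)*2^(m-1) * t^(m-1) * ((φ k : ℕ):ℝ)^(-a)
            = (8*(m:ℝ)*2^(m-1) * t⁻¹) * (c/4 * ((φ k : ℕ):ℝ)^(1-a)) := by
              rw [show 2*c*(m:ℝ)*2^(m-1) * t^(m-1) * ((φ k : ℕ):ℝ)^(-a)
                  = 2*c*(m:ℝ)*2^(m-1) * (t^(m-1) * ((φ k : ℕ):ℝ)^(-a)) by ring,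
                hidentity]
              ring
          _ ≤ (8*(m:ℝ)*2^(m-1) * t⁻¹) * W (φ k) := mul_le_mul_of_nonneg_left hWl hcoef
      rw [div_le_iff₀ (hWφpos k)]
      have hrearrange : (1 + 8*(m:ℝ)*2^(m-1) * t⁻¹) * W (φ k)
          = W (φ k) + (8*(m:ℝ)*2^(m-1) * t⁻¹) * W (φ k) := by ring
      rw [hrearrange]
      linarith [hincr, hkey, hsplit]
    have hlb : ∀ k : ℕ, (1:ℝ) ≤ W (φ (k+1)) / W (φ k) := fun k =>
      (one_le_div (hWφpos k)).2 (hWmono (hφ.monotone (Nat.le_succ k)))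
    have hC0 : Tendsto (fun k : ℕ => 1 + (8*(m:ℝ)*2^(m-1)) * (((k+K : ℕ)):ℝ)⁻¹)
        atTop (nhds 1) := by
      have h1 : Tendsto (fun k : ℕ => (((k+K : ℕ)):ℝ)) atTop atTop := by
        apply tendsto_natCast_atTop_atTop.comp
        exact tendsto_atTop_atTop.2 fun b => ⟨b, fun n hn => by omega⟩
      have h2 := h1.inv_tendsto_atTop
      have h3 := h2.const_mul (8*(m:ℝ)*2^(m-1))
      have h4 := (tendsto_const_nhds :
        Tendsto (fun _ : ℕ => (1:ℝ)) atTop (nhds 1)).add h3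
      simpa using h4
    exact tendsto_of_tendsto_of_tendsto_of_le_of_le tendsto_const_nhds hC0 hlb hub
  -- summability of 1 / W (φ k)
  have hBsum : Summable (fun k => 1 / W (φ k)) := by
    have hmaj : ∀ k : ℕ, 1 / W (φ k) ≤ (4/c) * (1 / (((k+K : ℕ)):ℝ)^2) := by
      intro k
      set t : ℝ := (((k+K : ℕ)):ℝ) with ht
      have ht1 : (1:ℝ) ≤ t := by
        rw [ht]; exact_mod_cast Nat.one_le_iff_ne_zero.mpr (by omega)
      have ht0 : (0:ℝ) < t := lt_of_lt_of_le one_pos ht1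
      have hφcast : ((φ k : ℕ):ℝ) = t^m := by
        show (((k+K)^m : ℕ):ℝ) = t^m
        rw [Nat.cast_pow, ht]
      have h4 : ((φ k : ℕ):ℝ)^(1-a) = t ^ ((m:ℝ)*(1-a)) := by
        rw [hφcast, ← Real.rpow_natCast t m, ← Real.rpow_mul ht0.le]
      have h5 : t^(2:ℝ) ≤ t^((m:ℝ)*(1-a)) := Real.rpow_le_rpow_of_exponent_le ht1 hma
      have h6 : t^(2:ℝ) = t^(2:ℕ) := by
        rw [← Real.rpow_natCast t 2]; norm_num
      have hWl : c/4 * t^(2:ℕ) ≤ W (φ k) := by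
        refine le_trans ?_ (hWlow (φ k) (hφK k))
        rw [h4, ← h6]
        have : (0:ℝ) ≤ c/4 := by linarith
        exact mul_le_mul_of_nonneg_left h5 this
      have hden : (0:ℝ) < c/4 * t^(2:ℕ) := by positivity
      have hstep := one_div_le_one_div_of_le hden hWl
      refine le_trans hstep (le_of_eq ?_)
      have ht2 : t ≠ 0 := ne_of_gt ht0
      field_simp
    apply Summable.of_nonneg_of_le (fun k => (one_div_pos.2 (hWφpos k)).le) hmaj
    apply Summable.mul_left
    have hs : Summable (fun n : ℕ => 1 / (n:ℝ)^2) :=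
      Real.summable_one_div_nat_pow.2 one_lt_two
    exact (summable_nat_add_iff (f := fun n : ℕ => 1 / (n:ℝ)^2) K).2 hs
  -- a.e. convergence along the subsequence
  set f : ℕ → Ω → ℝ :=
    fun k ω => (∑ n ∈ Finset.Icc 1 (φ k), X n ω) / W (φ k) - 1 with hf
  have hfm : ∀ k, AEMeasurable (f k) μ := fun k =>
    (((Finset.measurable_sum _ (fun n _ => hmeas n)).div_const _).sub
      measurable_const).aemeasurable
  have hB0 : ∀ k, 0 ≤ 1 / W (φ k) := fun k => (one_div_pos.2 (hWφpos k)).le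
  have hBle : ∀ k, ∫⁻ ω, ENNReal.ofReal ((f k ω)^2) ∂μ ≤ ENNReal.ofReal (1 / W (φ k)) := by
    intro k
    have hWne : W (φ k) ≠ 0 := ne_of_gt (hWφpos k)
    have hfsq : (fun ω => (f k ω)^2)
        = fun ω => ((W (φ k))^2)⁻¹ * (∑ n ∈ Finset.Icc 1 (φ k), (X n ω - e n))^2 := by
      funext ω
      have h1 : f k ω = (∑ n ∈ Finset.Icc 1 (φ k), (X n ω - e n)) / W (φ k) := by
        show (∑ n ∈ Finset.Icc 1 (φ k), X n ω) / W (φ k) - 1 = _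
        rw [Finset.sum_sub_distrib, ← hW (φ k), sub_div, div_self hWne]
      rw [h1, div_pow, div_eq_mul_inv, mul_comm]
    have hsqint : Integrable
        (fun ω => (∑ n ∈ Finset.Icc 1 (φ k), (X n ω - e n))^2) μ := by
      refine (integrable_const (((φ k : ℕ):ℝ)^2)).mono'
        ((Finset.measurable_sum _ (fun n _ => (hmeas n).sub measurable_const)).pow_const
          2).aestronglyMeasurable (ae_of_all _ fun ω => ?_)
      have habs : |∑ n ∈ Finset.Icc 1 (φ k), (X n ω - e n)| ≤ ((φ k : ℕ):ℝ) := by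
        refine le_trans (Finset.abs_sum_le_sum_abs _ _) ?_
        have hb : ∀ n ∈ Finset.Icc 1 (φ k), |X n ω - e n| ≤ 1 := fun n _ =>
          abs_le.2 ⟨by linarith [hpos n ω, he1 n], by linarith [hbdd n ω, he0 n]⟩
        have hcs := Finset.sum_le_card_nsmul _ _ _ hb
        rw [nsmul_eq_mul, mul_one, Nat.card_Icc] at hcs
        refine le_trans hcs ?_
        simp
      rw [Real.norm_eq_abs, abs_pow]
      exact pow_le_pow_left₀ (abs_nonneg _) habs 2
    have hfint : Integrable (fun ω => (f k ω)^2) μ := by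
      rw [hfsq]; exact hsqint.const_mul _
    rw [← ofReal_integral_eq_lintegral_ofReal hfint (ae_of_all _ fun ω => sq_nonneg _)]
    apply ENNReal.ofReal_le_ofReal
    have hIeq : ∫ ω, (f k ω)^2 ∂μ
        = ((W (φ k))^2)⁻¹ * ∫ ω, (∑ n ∈ Finset.Icc 1 (φ k), (X n ω - e n))^2 ∂μ := by
      rw [hfsq]
      exact integral_const_mul _ _
    rw [hIeq]
    calc ((W (φ k))^2)⁻¹ * ∫ ω, (∑ n ∈ Finset.Icc 1 (φ k), (X n ω - e n))^2 ∂μ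
        ≤ ((W (φ k))^2)⁻¹ * W (φ k) := by
          apply mul_le_mul_of_nonneg_left (hvar (φ k)) (by positivity)
      _ = 1 / W (φ k) := by
          rw [sq]
          field_simp
  have hae := aux_ae_tendsto_zero μ f hfm _ hB0 hBle hBsum
  filter_upwards [hae] with ω hω
  have h1ω : Tendsto (fun k => (∑ n ∈ Finset.Icc 1 (φ k), X n ω) / W (φ k))
      atTop (nhds 1) := by
    have h := hω.add_const 1
    have h2 : (fun k => f k ω + 1)
        = fun k => (∑ n ∈ Finset.Icc 1 (φ k), X n ω) / W (φ k) := by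
      funext k
      show ((∑ n ∈ Finset.Icc 1 (φ k), X n ω) / W (φ k) - 1) + 1 = _
      ring
    rw [h2] at h
    simpa using h
  have hfinal := aux_sandwich (fun N => ∑ n ∈ Finset.Icc 1 N, X n ω) W φ hφ
      (fun N => Finset.sum_nonneg fun n _ => hpos n ω)
      (fun N M h => Finset.sum_le_sum_of_subset_of_nonneg
        (Finset.Icc_subset_Icc le_rfl h) (fun n _ _ => hpos n ω))
      hWmono (hWφpos 0) h1ω hrat
  have heq : ∀ N : ℕ, (W N)⁻¹ * (∑ n ∈ Finset.Icc 1 N, X n ω)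
      = (∑ n ∈ Finset.Icc 1 N, X n ω) / W N := fun N => by
    rw [div_eq_mul_inv, mul_comm]
  simpa only [heq] using hfinal
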